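/- Let C be a binary linear [k+t, k] code with systematic generator matrix G = [I_k | A], and let S ⊆ {1,...,k} be such that c^S is a minimal codeword of C. Then 1 ≤ #S ≤ t+1. Moreover, if #S = t+1, then c^S_I = 0. -/

import Mathlib

open Finset

/-- The support of a vector `x ∈ F_2^n`: the set of nonzero coordinates. -/
def supp {n : ℕ} (x : Fin n → ZMod 2) : Set (Fin n) := {i | x i ≠ 0}

/-- `c` is a minimal codeword of the linear code (subspace) `C ≤ F_2^n`:
it is a nonzero codeword and no nonzero codeword has support properly contained in `supp c`. -/
def IsMinimal {n : ℕ} (C : Submodule (ZMod 2) (Fin n → ZMod 2)) (c : Fin n → ZMod 2) : Prop :=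
  c ∈ C ∧ c ≠ 0 ∧ ∀ c' ∈ C, c' ≠ 0 → ¬ supp c' ⊂ supp c

/-- `M(C)`: the number of minimal codewords of `C`. -/
noncomputable def Mcode {n : ℕ} (C : Submodule (ZMod 2) (Fin n → ZMod 2)) : ℕ :=
  Set.ncard {c | IsMinimal C c}

/-- The `i`-th row `g^i` of the systematic generator matrix `G = [I_k | A]`. -/
def row {k t : ℕ} (A : Fin k → Fin t → ZMod 2) (i : Fin k) : Fin (k + t) → ZMod 2 :=
  Fin.append (Pi.single i 1) (A i)

/-- The binary linear `[k+t, k]` code with systematic generator matrix `G = [I_k | A]`. -/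
def genCode {k t : ℕ} (A : Fin k → Fin t → ZMod 2) :
    Submodule (ZMod 2) (Fin (k + t) → ZMod 2) :=
  Submodule.span (ZMod 2) (Set.range (row A))

/-- `c^S = ∑_{i ∈ S} g^i`. -/
def cS {k t : ℕ} (A : Fin k → Fin t → ZMod 2) (S : Finset (Fin k)) : Fin (k + t) → ZMod 2 :=
  ∑ i ∈ S, row A i

/-- `c_I`: the restriction of a codeword to its last `t` coordinates (the information bits). -/
def infoBits {k t : ℕ} (c : Fin (k + t) → ZMod 2) : Fin t → ZMod 2 :=
  fun j => c (Fin.natAdd k j)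

/-- `a_τ(A)` : the number of indices `i` with `g^i_I = A i = τ`. -/
def aCount {k t : ℕ} (A : Fin k → Fin t → ZMod 2) (τ : Fin t → ZMod 2) : ℕ :=
  (Finset.univ.filter fun i => A i = τ).card

/-- `M_2(n, k)`: the maximum of `M(C)` over all binary linear `[n, k]` codes `C`. -/
noncomputable def M2 (n k : ℕ) : ℕ :=
  sSup {m | ∃ C : Submodule (ZMod 2) (Fin n → ZMod 2),
    Module.finrank (ZMod 2) C = k ∧ Mcode C = m}



section Aux

variable {k t : ℕ} (A : Fin k → Fin t → ZMod 2)

lemma zmod2_eq_one {a : ZMod 2} (h : a ≠ 0) : a = 1 := by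
  revert h; revert a; decide

lemma cS_castAdd (S : Finset (Fin k)) (m : Fin k) :
    cS A S (Fin.castAdd t m) = if m ∈ S then 1 else 0 := by
  simp only [cS, Finset.sum_apply, row, Fin.append_left, Pi.single_apply]
  rw [Finset.sum_ite_eq S m (fun _ => (1 : ZMod 2))]

lemma cS_natAdd (S : Finset (Fin k)) (j : Fin t) :
    cS A S (Fin.natAdd k j) = ∑ i ∈ S, A i j := by
  simp only [cS, Finset.sum_apply, row, Fin.append_right]

lemma cS_mem (S : Finset (Fin k)) : cS A S ∈ genCode A := by
  apply Submodule.sum_mem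
  intro i _
  exact Submodule.subset_span ⟨i, rfl⟩

lemma cS_ne_zero {S : Finset (Fin k)} (hS : S.Nonempty) : cS A S ≠ 0 := by
  obtain ⟨m, hm⟩ := hS
  intro h0
  have := cS_castAdd A S m
  rw [h0, if_pos hm] at this
  simp at this

lemma key {S T : Finset (Fin k)} (h : IsMinimal (genCode A) (cS A S))
    (hTS : T ⊆ S) (hT : T.Nonempty) (hsum : ∀ j, ∑ i ∈ T, A i j = 0) : T = S := by
  by_contra hne
  apply h.2.2 (cS A T) (cS_mem A T) (cS_ne_zero A hT)
  constructor
  · intro x hx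
    induction x using Fin.addCases with
    | left m =>
      have h1 : cS A T (Fin.castAdd t m) ≠ 0 := hx
      rw [cS_castAdd] at h1
      have hmT : m ∈ T := by by_contra hh; rw [if_neg hh] at h1; exact h1 rfl
      show cS A S (Fin.castAdd t m) ≠ 0
      rw [cS_castAdd, if_pos (hTS hmT)]
      exact one_ne_zero
    | right j =>
      exact absurd (by rw [cS_natAdd]; exact hsum j) hx
  · intro hsub
    obtain ⟨m, hmS, hmT⟩ := Finset.exists_of_ssubset (hTS.ssubset_of_ne hne)
    have h1 : Fin.castAdd t m ∈ supp (cS A S) := by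
      show cS A S (Fin.castAdd t m) ≠ 0
      rw [cS_castAdd, if_pos hmS]; exact one_ne_zero
    have h2 : cS A T (Fin.castAdd t m) ≠ 0 := hsub h1
    rw [cS_castAdd, if_neg hmT] at h2
    exact h2 rfl

end Aux

theorem stmt2 (k t : ℕ) (A : Fin k → Fin t → ZMod 2) (S : Finset (Fin k))
    (h : IsMinimal (genCode A) (cS A S)) :
    1 ≤ S.card ∧ S.card ≤ t + 1 ∧ (S.card = t + 1 → infoBits (cS A S) = 0) := by
  have hSne : S.Nonempty := by
    rcases S.eq_empty_or_nonempty with rfl | hne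
    · exact absurd (by simp [cS]) h.2.1
    · exact hne
  have : Nonempty ↥S := hSne.to_subtype
  set f : (↥S → ZMod 2) →ₗ[ZMod 2] (Fin t → ZMod 2) :=
    Fintype.linearCombination (ZMod 2) (fun i : ↥S => A i) with hf
  have hfapply : ∀ x : ↥S → ZMod 2, f x = ∑ i : ↥S, x i • A i.val := by
    intro x; simp [hf, Fintype.linearCombination]
  -- every nonzero kernel element is the all-ones vector
  have hker : ∀ x ∈ LinearMap.ker f, x ≠ 0 → x = fun _ => 1 := by
    intro x hx hx0
    set T : Finset (Fin k) := (Finset.univ.filter (fun i : ↥S => x i ≠ 0)).image Subtype.val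
      with hT
    have hTS : T ⊆ S := by
      intro i hi
      simp only [hT, Finset.mem_image, Finset.mem_filter] at hi
      obtain ⟨i', _, rfl⟩ := hi
      exact i'.2
    have hTne : T.Nonempty := by
      have hex : ∃ i : ↥S, x i ≠ 0 := by
        by_contra hc
        push_neg at hc
        exact hx0 (funext fun i => hc i)
      obtain ⟨i, hi⟩ := hex
      exact ⟨i.val, by simp [hT, hi]⟩
    have hsum : ∀ j, ∑ i ∈ T, A i j = 0 := by
      intro j
      have h1 : ∑ i : ↥S, x i • A i.val = 0 := by
        rw [← hfapply]
        exact (LinearMap.mem_ker.mp hx)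
      have h2 : ∑ i : ↥S, x i * A i.val j = 0 := by
        simpa using congrFun h1 j
      calc ∑ i ∈ T, A i j
          = ∑ i ∈ Finset.univ.filter (fun i : ↥S => x i ≠ 0), A i.val j := by
            rw [hT, Finset.sum_image (by intro a _ b _ hab; exact Subtype.ext hab)]
        _ = ∑ i ∈ Finset.univ.filter (fun i : ↥S => x i ≠ 0), x i * A i.val j := by
            apply Finset.sum_congr rfl
            intro i hi
            rw [zmod2_eq_one (Finset.mem_filter.mp hi).2, one_mul]
        _ = ∑ i : ↥S, x i * A i.val j := by
            apply Finset.sum_filter_of_ne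
            intro i _ hne hxi
            exact hne (by rw [hxi, zero_mul])
        _ = 0 := h2
    have hTeq : T = S := key A h hTS hTne hsum
    funext i
    have hiT : i.val ∈ T := by rw [hTeq]; exact i.2
    simp only [hT, Finset.mem_image, Finset.mem_filter, Finset.mem_univ, true_and] at hiT
    obtain ⟨i', hi', hval⟩ := hiT
    have : i' = i := Subtype.ext hval
    subst this
    exact zmod2_eq_one hi'
  -- kernel is contained in the span of the all-ones vector
  have hallones : (fun _ : ↥S => (1 : ZMod 2)) ≠ 0 := by
    intro h0
    obtain ⟨i⟩ := ‹Nonempty ↥S›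
    have := congrFun h0 i
    simp at this
  have hkerle : LinearMap.ker f ≤ Submodule.span (ZMod 2) {fun _ : ↥S => (1 : ZMod 2)} := by
    intro x hx
    rcases eq_or_ne x 0 with rfl | hx0
    · exact Submodule.zero_mem _
    · rw [hker x hx hx0]
      exact Submodule.subset_span rfl
  have hker1 : Module.finrank (ZMod 2) (LinearMap.ker f) ≤ 1 := by
    calc Module.finrank (ZMod 2) (LinearMap.ker f)
        ≤ Module.finrank (ZMod 2)
            (Submodule.span (ZMod 2) {fun _ : ↥S => (1 : ZMod 2)}) :=
          Submodule.finrank_mono hkerle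
      _ = 1 := finrank_span_singleton hallones
  have hrn := LinearMap.finrank_range_add_finrank_ker f
  have hdom : Module.finrank (ZMod 2) (↥S → ZMod 2) = S.card := by
    rw [Module.finrank_pi, Fintype.card_coe]
  have hrange : Module.finrank (ZMod 2) (LinearMap.range f) ≤ t := by
    have := Submodule.finrank_le (LinearMap.range f)
    rwa [Module.finrank_pi, Fintype.card_fin] at this
  rw [hdom] at hrn
  refine ⟨hSne.card_pos, by omega, ?_⟩
  intro hcard
  have hkpos : 0 < Module.finrank (ZMod 2) (LinearMap.ker f) := by omega
  have : Nontrivial (LinearMap.ker f) := Module.nontrivial_of_finrank_pos hkpos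
  obtain ⟨x, hx0⟩ := exists_ne (0 : LinearMap.ker f)
  have hxker : (x : ↥S → ZMod 2) ∈ LinearMap.ker f := x.2
  have hxne : (x : ↥S → ZMod 2) ≠ 0 := by
    intro h0
    exact hx0 (Subtype.ext h0)
  have hxall := hker _ hxker hxne
  have hfone : f (fun _ => 1) = 0 := by rw [← hxall]; exact LinearMap.mem_ker.mp hxker
  funext j
  have h1 : ∑ i : ↥S, A i.val j = 0 := by
    have := congrFun (by rw [← hfapply]; exact hfone :
      (∑ i : ↥S, (1 : ZMod 2) • A i.val) = 0) j
    simpa using this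
  show cS A S (Fin.natAdd k j) = 0
  rw [cS_natAdd, ← Finset.sum_coe_sort S (fun i => A i j)]
  exact h1
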